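/- arXiv:2402.14791 — 3 statements merged into one kernel-verified Lean document; each statement's English description precedes it below -/
import Mathlib

section
/- Let H be a finite-dimensional complex inner product space, ψ ∈ H a unit vector, and Π : H → H an orthogonal projection (a self-adjoint idempotent linear map). Define the reflections R_ψ = I − 2⟨ψ,·⟩ψ and R_Π = I − 2Π, and the walk operator W = −R_ψ R_Π. Then for every natural number μ, ‖Π(W^μ ψ)‖² = sin²((2μ+1)·arcsin(‖Πψ‖)). -/
/-- Exact success-probability formula for `μ` rounds of amplitude amplification:
`‖Π (W^μ ψ)‖² = sin²((2μ+1)·arcsin ‖Π ψ‖)`. -/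
theorem amplitude_amplification_success_probability
    {H : Type*} [NormedAddCommGroup H] [InnerProductSpace ℂ H] [FiniteDimensional ℂ H]
    (ψ : H) (hψ : ‖ψ‖ = 1)
    (P : H →ₗ[ℂ] H) (hsa : P.IsSymmetric) (hidem : P ∘ₗ P = P)
    (Rψ RP W : H →ₗ[ℂ] H)
    (hRψ : ∀ x : H, Rψ x = x - (2 : ℂ) • ((inner ℂ ψ x : ℂ) • ψ))
    (hRP : RP = LinearMap.id - (2 : ℂ) • P)
    (hW : W = -(Rψ ∘ₗ RP)) (μ : ℕ) :
    ‖P ((W ^ μ) ψ)‖ ^ 2 = Real.sin ((2 * (μ : ℝ) + 1) * Real.arcsin ‖P ψ‖) ^ 2 := by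
  have hselfψ : (inner ℂ ψ ψ : ℂ) = 1 := by
    rw [inner_self_eq_norm_sq_to_K, hψ]; norm_num
  have hPP : ∀ x : H, P (P x) = P x := fun x => congrFun (congrArg DFunLike.coe hidem) x
  by_cases h0 : P ψ = 0
  · have hWψ : W ψ = ψ := by
      have hRPψ : RP ψ = ψ := by simp [hRP, h0]
      have : Rψ ψ = -ψ := by rw [hRψ, hselfψ]; module
      simp [hW, hRPψ, this]
    have hWμ : (W ^ μ) ψ = ψ := by
      induction μ with
      | zero => simp
      | succ n ih => rw [pow_succ', Module.End.mul_apply, ih, hWψ]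
    simp [hWμ, h0]
  -- general case: a = ‖P ψ‖ > 0
  set a : ℝ := ‖P ψ‖ with ha_def
  have ha : 0 < a := norm_pos_iff.mpr h0
  have h2 : (inner ℂ (P ψ) (P ψ) : ℂ) = inner ℂ ψ (P ψ) := by
    rw [hsa ψ (P ψ), hPP ψ]
  have hipPψ : (inner ℂ ψ (P ψ) : ℂ) = (a : ℂ) ^ 2 := by
    rw [← h2, inner_self_eq_norm_sq_to_K]
    norm_cast
  have horth : (inner ℂ (P ψ) (ψ - P ψ) : ℂ) = 0 := by
    rw [inner_sub_right, hsa ψ ψ, h2, hipPψ, sub_self]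
  have hpyth : ‖ψ - P ψ‖ ^ 2 = 1 - a ^ 2 := by
    have := norm_add_sq_eq_norm_sq_add_norm_sq_of_inner_eq_zero (P ψ) (ψ - P ψ) horth
    have h2 : P ψ + (ψ - P ψ) = ψ := by abel
    rw [h2, hψ] at this
    nlinarith [this]
  set c : ℝ := Real.sqrt (1 - a ^ 2) with hc_def
  have hc0 : 0 ≤ c := Real.sqrt_nonneg _
  have hc2 : c ^ 2 = 1 - a ^ 2 := by
    rw [hc_def, Real.sq_sqrt]; nlinarith [hpyth, sq_nonneg ‖ψ - P ψ‖]
  have hbnorm : ‖ψ - P ψ‖ = c := by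
    have : ‖ψ - P ψ‖ ^ 2 = c ^ 2 := by rw [hpyth, hc2]
    nlinarith [norm_nonneg (ψ - P ψ), hc0, this]
  have ha1 : a ≤ 1 := by nlinarith [hc2, sq_nonneg c]
  set θ : ℝ := Real.arcsin a with hθ_def
  have hsinθ : Real.sin θ = a := Real.sin_arcsin (by linarith) ha1
  have hcosθ : Real.cos θ = c := by rw [hθ_def, Real.cos_arcsin]
  -- orthonormal-ish basis of the 2D invariant subspace
  obtain ⟨e1, he1_def⟩ : ∃ e : H, e = ((a : ℂ))⁻¹ • P ψ := ⟨_, rfl⟩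
  obtain ⟨e2, he2_def⟩ : ∃ e : H, e = ((c : ℂ))⁻¹ • (ψ - P ψ) := ⟨_, rfl⟩
  have hane : (a : ℂ) ≠ 0 := by exact_mod_cast ha.ne'
  have hae1 : (a : ℂ) • e1 = P ψ := by
    rw [he1_def, smul_smul, mul_inv_cancel₀ hane, one_smul]
  have hce2 : (c : ℂ) • e2 = ψ - P ψ := by
    rcases eq_or_ne c 0 with hc | hc
    · have : ψ - P ψ = 0 := by
        rw [← norm_eq_zero, hbnorm]; exact hc
      rw [he2_def, this, smul_zero, smul_zero]
    · rw [he2_def, smul_smul, mul_inv_cancel₀ (by exact_mod_cast hc), one_smul]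
  have hψdec : ψ = (a : ℂ) • e1 + (c : ℂ) • e2 := by
    rw [hae1, hce2]; abel
  have hPe1 : P e1 = e1 := by rw [he1_def, map_smul, hPP]
  have hPe2 : P e2 = 0 := by
    rw [he2_def, map_smul, map_sub, hPP, sub_self, smul_zero]
  have hinner1 : (inner ℂ ψ e1 : ℂ) = (a : ℂ) := by
    rw [he1_def, inner_smul_right, hipPψ]
    rw [← Complex.ofReal_inv]
    push_cast
    field_simp
  have hinner2 : (inner ℂ ψ e2 : ℂ) = (c : ℂ) := by
    rw [he2_def, inner_smul_right, inner_sub_right, hselfψ, hipPψ]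
    have h12 : (1 : ℂ) - (a:ℂ)^2 = (c:ℂ)^2 := by
      rw [show ((c:ℂ))^2 = ((c^2 : ℝ) : ℂ) by push_cast; ring, hc2]
      push_cast; ring
    rw [h12]
    rcases eq_or_ne c 0 with hc | hc
    · simp [hc]
    · have hcne : (c : ℂ) ≠ 0 := by exact_mod_cast hc
      field_simp
  have hnorme1 : ‖e1‖ = 1 := by
    rw [he1_def, norm_smul]
    simp only [norm_inv, Complex.norm_real, Real.norm_eq_abs, abs_of_pos ha]
    rw [← ha_def]
    field_simp
  -- action of W on e1, e2
  have hWe1 : W e1 = (Real.cos (2*θ) : ℂ) • e1 - (Real.sin (2*θ) : ℂ) • e2 := by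
    have hRPe1 : RP e1 = -e1 := by
      simp [hRP, hPe1]; module
    have : W e1 = e1 - (2:ℂ) • ((a:ℂ) • ψ) := by
      rw [hW, LinearMap.neg_apply, LinearMap.comp_apply, hRPe1, map_neg, hRψ, hinner1]
      module
    rw [this, hψdec]
    have hcos2 : Real.cos (2*θ) = 1 - 2 * a^2 := by
      rw [Real.cos_two_mul', ← hsinθ]
      nlinarith [Real.sin_sq_add_cos_sq θ]
    have hsin2 : Real.sin (2*θ) = 2 * a * c := by
      rw [Real.sin_two_mul, hsinθ, hcosθ]
    rw [hcos2, hsin2]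
    push_cast
    module
  have hWe2 : W e2 = (Real.sin (2*θ) : ℂ) • e1 + (Real.cos (2*θ) : ℂ) • e2 := by
    have hRPe2 : RP e2 = e2 := by simp [hRP, hPe2]
    have : W e2 = -e2 + (2:ℂ) • ((c:ℂ) • ψ) := by
      rw [hW, LinearMap.neg_apply, LinearMap.comp_apply, hRPe2, hRψ, hinner2]
      module
    rw [this, hψdec]
    have hcos2 : Real.cos (2*θ) = 2 * c^2 - 1 := by
      rw [Real.cos_two_mul, hcosθ]
    have hsin2 : Real.sin (2*θ) = 2 * a * c := by
      rw [Real.sin_two_mul, hsinθ, hcosθ]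
    rw [hcos2, hsin2]
    push_cast
    module
  -- main induction
  have key : ∀ n : ℕ, (W ^ n) ψ =
      (Real.sin ((2 * (n:ℝ) + 1) * θ) : ℂ) • e1 + (Real.cos ((2 * (n:ℝ) + 1) * θ) : ℂ) • e2 := by
    intro n
    induction n with
    | zero =>
      simp only [pow_zero, Module.End.one_apply, Nat.cast_zero]
      norm_num [hsinθ, hcosθ, hψdec]
    | succ n ih =>
      rw [pow_succ', Module.End.mul_apply, ih, map_add, map_smul, map_smul, hWe1, hWe2]
      have hang : (2 * ((n:ℝ)+1) + 1) * θ = (2 * (n:ℝ) + 1) * θ + 2 * θ := by ring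
      push_cast [hang, Real.sin_add, Real.cos_add]
      module
  rw [key μ, map_add, map_smul, map_smul, hPe1, hPe2, smul_zero, add_zero, norm_smul,
    hnorme1, mul_one, Complex.norm_real, Real.norm_eq_abs, sq_abs]
end

section
/- Let H be a finite-dimensional complex inner product space, ψ ∈ H a unit vector, and Π : H → H an orthogonal projection (a self-adjoint idempotent linear map). Define the reflections R_ψ = I − 2⟨ψ,·⟩ψ and R_Π = I − 2Π, and the walk operator W = −R_ψ R_Π. Let μ ≥ 1 be an integer, set P₀ = sin²(π/(2(2μ+1))), and assume ‖Πψ‖² ≤ P₀. Then sin²((2/π)·arcsin(‖Π(W^μ ψ)‖)·arcsin(√P₀)) = ‖Πψ‖². (In words: if the amplified probability ‖Π(W^μψ)‖² is measured exactly, the amplified amplitude estimation post-processing recovers the original expectation value ⟨ψ, Πψ⟩ = ‖Πψ‖² exactly.) -/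
set_option maxHeartbeats 1000000 in
/-- If the amplified probability `‖Π (W^μ ψ)‖²` is measured exactly, the amplified
amplitude estimation post-processing recovers `⟨ψ, Πψ⟩ = ‖Πψ‖²` exactly. -/
theorem aae_exact_recovery
    {H : Type*} [NormedAddCommGroup H] [InnerProductSpace ℂ H] [FiniteDimensional ℂ H]
    (ψ : H) (hψ : ‖ψ‖ = 1)
    (P : H →ₗ[ℂ] H) (hsa : P.IsSymmetric) (hidem : P ∘ₗ P = P)
    (Rψ RP W : H →ₗ[ℂ] H)
    (hRψ : ∀ x : H, Rψ x = x - (2 : ℂ) • ((inner ℂ ψ x : ℂ) • ψ))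
    (hRP : RP = LinearMap.id - (2 : ℂ) • P)
    (hW : W = -(Rψ ∘ₗ RP))
    (μ : ℕ) (hμ : 1 ≤ μ) (P₀ : ℝ)
    (hP₀ : P₀ = Real.sin (Real.pi / (2 * (2 * (μ : ℝ) + 1))) ^ 2)
    (hsmall : ‖P ψ‖ ^ 2 ≤ P₀) :
    Real.sin ((2 / Real.pi) * Real.arcsin ‖P ((W ^ μ) ψ)‖ * Real.arcsin (Real.sqrt P₀)) ^ 2
      = ‖P ψ‖ ^ 2 := by
  -- easy degenerate case: `P ψ = 0`
  by_cases h0 : P ψ = 0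
  · have hinner1 : (inner ℂ ψ ψ : ℂ) = 1 := by
      rw [inner_self_eq_norm_sq_to_K, hψ]; norm_num
    have hRPψ : RP ψ = ψ := by rw [hRP]; simp [h0]
    have hWψ : W ψ = ψ := by
      rw [hW]
      simp only [LinearMap.neg_apply, LinearMap.comp_apply, hRPψ, hRψ ψ, hinner1]
      module
    have hiter : ∀ n : ℕ, (W ^ n) ψ = ψ := by
      intro n
      induction n with
      | zero => simp
      | succ n ih => rw [pow_succ', Module.End.mul_apply, ih, hWψ]
    rw [hiter μ, h0]
    simp
  -- main case
  set u := P ψ with hu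
  set v := ψ - P ψ with hv
  have hψuv : ψ = u + v := by rw [hu, hv]; abel
  have hPu : P u = u := by
    have := congrArg (fun f => f ψ) hidem
    simpa using this
  have hPv : P v = 0 := by rw [hv, map_sub, show P (P ψ) = P ψ from hPu, sub_self]
  have h2 : (inner ℂ u u : ℂ) = inner ℂ ψ u := by
    conv_lhs => rw [hu, hsa ψ (P ψ)]
    rw [show P (P ψ) = P ψ from by simpa using congrArg (fun f => f ψ) hidem]
  have hinner_pp : (inner ℂ ψ u : ℂ) = ((‖u‖^2 : ℝ) : ℂ) := by
    rw [← h2, inner_self_eq_norm_sq_to_K]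
    norm_cast
  have hinner_uv : (inner ℂ u v : ℂ) = 0 := by
    rw [hv, inner_sub_right]
    have h1 : (inner ℂ (P ψ) ψ : ℂ) = inner ℂ ψ (P ψ) := hsa ψ ψ
    rw [hu] at h2 ⊢
    rw [h2, h1, sub_self]
  have hab : ‖u‖^2 + ‖v‖^2 = 1 := by
    have := norm_add_sq (𝕜 := ℂ) u v
    rw [← hψuv, hψ, hinner_uv] at this
    simp at this
    linarith
  have hinner_pv : (inner ℂ ψ v : ℂ) = ((‖v‖^2 : ℝ) : ℂ) := by
    rw [hψuv, inner_add_left, hinner_uv, zero_add, inner_self_eq_norm_sq_to_K]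
    norm_cast
  -- action of W on u, v
  have hRPu : RP u = -u := by
    rw [hRP]; simp [hPu, two_smul]
  have hRPv : RP v = v := by
    rw [hRP]; simp [hPv]
  have hWu : W u = ((1-2*‖u‖^2 : ℝ):ℂ) • u + ((-(2*‖u‖^2) : ℝ):ℂ) • v := by
    rw [hW]
    simp only [LinearMap.neg_apply, LinearMap.comp_apply, hRPu, map_neg, hRψ u,
      inner_neg_right]
    rw [hinner_pp]
    rw [hψuv]
    push_cast
    module
  have hWv : W v = ((2*‖v‖^2 : ℝ):ℂ) • u + ((2*‖v‖^2 - 1 : ℝ):ℂ) • v := by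
    rw [hW]
    simp only [LinearMap.neg_apply, LinearMap.comp_apply, hRPv, hRψ v]
    rw [hinner_pv]
    rw [hψuv]
    push_cast
    module
  have hkey : ∀ s c : ℝ, W ((s:ℂ) • u + (c:ℂ) • v)
      = ((s*(1-2*‖u‖^2) + c*(2*‖v‖^2) : ℝ):ℂ) • u
        + ((-(2*s*‖u‖^2) + c*(2*‖v‖^2-1) : ℝ):ℂ) • v := by
    intro s c
    rw [map_add, map_smul, map_smul, hWu, hWv]
    push_cast
    module
  -- positivity facts
  set a := ‖u‖ with haa
  set b := ‖v‖ with hbb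
  have ha : 0 < a := by
    rw [haa]
    exact norm_pos_iff.mpr h0
  set x₀ := Real.pi / (2 * (2 * (μ : ℝ) + 1)) with hx₀
  have hm : (0:ℝ) < 2 * (μ:ℝ) + 1 := by positivity
  have hx₀pos : 0 < x₀ := by rw [hx₀]; positivity
  have hx₀lt : x₀ < Real.pi / 2 := by
    rw [hx₀, div_lt_div_iff₀ (by positivity) two_pos]
    nlinarith [Real.pi_pos, (Nat.one_le_cast (α := ℝ)).mpr hμ]
  have hsinx₀ : 0 ≤ Real.sin x₀ :=
    Real.sin_nonneg_of_nonneg_of_le_pi hx₀pos.le (by linarith [Real.pi_pos])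
  have hcosx₀ : 0 < Real.cos x₀ :=
    Real.cos_pos_of_mem_Ioo ⟨by linarith, hx₀lt⟩
  have hsinsq : Real.sin x₀ ^ 2 < 1 := by
    have hc2 : 0 < Real.cos x₀ ^ 2 := by positivity
    nlinarith [Real.sin_sq_add_cos_sq x₀]
  have ha2 : a ^ 2 < 1 := lt_of_le_of_lt (by rw [hP₀] at hsmall; exact hsmall) hsinsq
  have ha1 : a ≤ 1 := by nlinarith [ha.le]
  have hb : 0 < b := by
    have hb2 : 0 < b ^ 2 := by rw [haa, hbb] at *; linarith
    have : b ≠ 0 := fun h => by rw [h] at hb2; norm_num at hb2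
    exact lt_of_le_of_ne (norm_nonneg v) (Ne.symm this)
  set θ := Real.arcsin a with hθ
  have hsinθ : Real.sin θ = a := Real.sin_arcsin (by linarith) ha1
  have hcosθ : Real.cos θ = b := by
    rw [hθ, Real.cos_arcsin]
    rw [show (1 : ℝ) - a^2 = b^2 by linarith]
    exact Real.sqrt_sq hb.le
  -- the main induction: amplitude amplification
  have main : ∀ n : ℕ, (W ^ n) ψ
      = ((Real.sin ((2*(n:ℝ)+1) * θ) / a : ℝ):ℂ) • u
        + ((Real.cos ((2*(n:ℝ)+1) * θ) / b : ℝ):ℂ) • v := by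
    intro n
    induction n with
    | zero =>
      simp only [pow_zero, Module.End.one_apply, Nat.cast_zero]
      rw [show (2*(0:ℝ)+1) * θ = θ by ring, hsinθ, hcosθ,
        div_self ha.ne', div_self hb.ne']
      rw [hψuv]
      norm_num
    | succ n ih =>
      rw [pow_succ', Module.End.mul_apply, ih, hkey]
      have harg : (2*((n:ℝ)+1)+1) * θ = (2*(n:ℝ)+1) * θ + 2*θ := by ring
      have hcast : ((n+1:ℕ):ℝ) = (n:ℝ)+1 := by push_cast; ring
      rw [hcast, harg, Real.sin_add, Real.cos_add, Real.sin_two_mul,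
        Real.cos_two_mul, hsinθ, hcosθ]
      have hX : Real.sin ((2*(n:ℝ)+1)*θ) / a * (1-2*a^2)
            + Real.cos ((2*(n:ℝ)+1)*θ) / b * (2*b^2)
          = (Real.sin ((2*(n:ℝ)+1)*θ) * (2*b^2-1)
            + Real.cos ((2*(n:ℝ)+1)*θ) * (2*a*b)) / a := by
        have h1 : (1:ℝ) - 2*a^2 = 2*b^2 - 1 := by linarith
        rw [h1]
        field_simp
      have hY : -(2 * (Real.sin ((2*(n:ℝ)+1)*θ) / a) * a^2)
            + Real.cos ((2*(n:ℝ)+1)*θ) / b * (2*b^2-1)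
          = (Real.cos ((2*(n:ℝ)+1)*θ) * (2*b^2-1)
            - Real.sin ((2*(n:ℝ)+1)*θ) * (2*a*b)) / b := by
        field_simp
        ring
      rw [hX, hY]
  -- bounds on θ
  have hasin : a ≤ Real.sin x₀ := by
    have h := hsmall
    rw [hP₀] at h
    have h2 := Real.sqrt_le_sqrt h
    rwa [Real.sqrt_sq ha.le, Real.sqrt_sq hsinx₀] at h2
  have hθle : θ ≤ x₀ := by
    rw [hθ]
    calc Real.arcsin a ≤ Real.arcsin (Real.sin x₀) := Real.monotone_arcsin hasin
      _ = x₀ := Real.arcsin_sin (by linarith) hx₀lt.le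
  have hθ0 : 0 ≤ θ := Real.arcsin_nonneg.mpr ha.le
  have hT : (2*(μ:ℝ)+1) * θ ≤ Real.pi / 2 := by
    calc (2*(μ:ℝ)+1) * θ ≤ (2*(μ:ℝ)+1) * x₀ := by nlinarith
      _ = Real.pi / 2 := by rw [hx₀]; field_simp
  have hT0 : 0 ≤ (2*(μ:ℝ)+1) * θ := by positivity
  have hsinT : 0 ≤ Real.sin ((2*(μ:ℝ)+1) * θ) :=
    Real.sin_nonneg_of_nonneg_of_le_pi hT0 (by linarith [Real.pi_pos])
  -- norm of the projected amplified state
  have hnorm : ‖P ((W ^ μ) ψ)‖ = Real.sin ((2*(μ:ℝ)+1) * θ) := by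
    rw [main μ, map_add, map_smul, map_smul, hPu, hPv, smul_zero, add_zero]
    rw [norm_smul]
    simp only [Complex.norm_real, Real.norm_eq_abs]
    rw [abs_of_nonneg (by positivity : (0:ℝ) ≤ Real.sin ((2*(μ:ℝ)+1)*θ) / a)]
    rw [← haa, div_mul_cancel₀ _ ha.ne']
  rw [hnorm]
  -- final arcsin manipulations
  have harcN : Real.arcsin (Real.sin ((2*(μ:ℝ)+1) * θ)) = (2*(μ:ℝ)+1) * θ :=
    Real.arcsin_sin (by linarith) hT
  have hsqrtP₀ : Real.sqrt P₀ = Real.sin x₀ := by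
    rw [hP₀, Real.sqrt_sq hsinx₀]
  have harcP₀ : Real.arcsin (Real.sqrt P₀) = x₀ := by
    rw [hsqrtP₀, Real.arcsin_sin (by linarith) hx₀lt.le]
  rw [harcN, harcP₀]
  have hfin : (2 / Real.pi) * ((2*(μ:ℝ)+1) * θ) * x₀ = θ := by
    rw [hx₀]
    field_simp
  rw [hfin, hθ, Real.sin_arcsin (by linarith) ha1]
end

section
/- Fix P₀ ∈ (0,1) and define g : (0,1) → ℝ by g(q) = sin²((2/π)·arcsin(√q)·arcsin(√P₀)). Then for all real a, b with 0 < a ≤ b < 1, the function g is Lipschitz on [a, b] with Lipschitz constant arcsin(√P₀) / (π·√(a(1−b))); that is, for all q₁, q₂ ∈ [a,b], |g(q₁) − g(q₂)| ≤ (arcsin(√P₀) / (π·√(a(1−b)))) · |q₁ − q₂|. -/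
/-- Lipschitz bound for the amplified amplitude estimation post-processing map
`g(q) = sin²((2/π)·arcsin √q · arcsin √P₀)` on `[a, b] ⊆ (0,1)`, with Lipschitz constant
`arcsin(√P₀)/(π·√(a(1−b)))`. -/
theorem aae_postprocessing_lipschitz
    (P₀ : ℝ) (hP₀ : P₀ ∈ Set.Ioo (0 : ℝ) 1) (a b : ℝ)
    (ha : 0 < a) (hab : a ≤ b) (hb : b < 1) :
    ∀ q₁ ∈ Set.Icc a b, ∀ q₂ ∈ Set.Icc a b,
      |Real.sin ((2 / Real.pi) * Real.arcsin (Real.sqrt q₁) * Real.arcsin (Real.sqrt P₀)) ^ 2 -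
          Real.sin ((2 / Real.pi) * Real.arcsin (Real.sqrt q₂) * Real.arcsin (Real.sqrt P₀)) ^ 2|
        ≤ (Real.arcsin (Real.sqrt P₀) / (Real.pi * Real.sqrt (a * (1 - b)))) * |q₁ - q₂| := by
  intro q₁ hq₁ q₂ hq₂
  have hπ := Real.pi_pos
  set s := Real.arcsin (Real.sqrt P₀) with hs
  have hs0 : 0 ≤ s := Real.arcsin_nonneg.2 (Real.sqrt_nonneg _)
  set c := (2 / Real.pi) * s with hc
  set C := s / (Real.pi * Real.sqrt (a * (1 - b))) with hC
  set f : ℝ → ℝ := fun q => Real.sin (c * Real.arcsin (Real.sqrt q)) ^ 2 with hf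
  set f' : ℝ → ℝ := fun q => (2 * Real.sin (c * Real.arcsin (Real.sqrt q)) *
      Real.cos (c * Real.arcsin (Real.sqrt q))) *
      (c * (1 / Real.sqrt (1 - Real.sqrt q ^ 2) * (1 / (2 * Real.sqrt q)))) with hf'
  have hder : ∀ x ∈ Set.Icc a b, HasDerivWithinAt f (f' x) (Set.Icc a b) x := by
    intro x hx
    have hx0 : 0 < x := lt_of_lt_of_le ha hx.1
    have hx1 : x < 1 := lt_of_le_of_lt hx.2 hb
    have hsx : Real.sqrt x < 1 := by
      rw [show (1:ℝ) = Real.sqrt 1 by simp]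
      exact Real.sqrt_lt_sqrt hx0.le hx1
    have h1 : HasDerivAt Real.sqrt (1 / (2 * Real.sqrt x)) x := Real.hasDerivAt_sqrt hx0.ne'
    have hne : Real.sqrt x ≠ -1 := by
      intro h; nlinarith [Real.sqrt_nonneg x]
    have h2 : HasDerivAt Real.arcsin (1 / Real.sqrt (1 - Real.sqrt x ^ 2)) (Real.sqrt x) :=
      Real.hasDerivAt_arcsin hne hsx.ne
    have h3 : HasDerivAt (fun q => c * Real.arcsin (Real.sqrt q))
        (c * (1 / Real.sqrt (1 - Real.sqrt x ^ 2) * (1 / (2 * Real.sqrt x)))) x :=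
      (h2.comp x h1).const_mul c
    have h4 : HasDerivAt (fun y : ℝ => Real.sin y ^ 2)
        (2 * Real.sin (c * Real.arcsin (Real.sqrt x)) * Real.cos (c * Real.arcsin (Real.sqrt x)))
        (c * Real.arcsin (Real.sqrt x)) := by
      have := (Real.hasDerivAt_sin (c * Real.arcsin (Real.sqrt x))).fun_pow 2
      simpa [mul_comm, mul_assoc, mul_left_comm] using this
    exact ((h4.comp x h3).congr_deriv (g' := f' x) (by simp only [hf'])).hasDerivWithinAt
  have hbound : ∀ x ∈ Set.Icc a b, ‖f' x‖ ≤ C := by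
    intro x hx
    have hx0 : 0 < x := lt_of_lt_of_le ha hx.1
    have hx1 : x < 1 := lt_of_le_of_lt hx.2 hb
    have hsq : Real.sqrt x ^ 2 = x := Real.sq_sqrt hx0.le
    have habd : 0 < a * (1 - b) := by nlinarith
    have hx1d : 0 < x * (1 - x) := by nlinarith
    have hmono : Real.sqrt (a * (1 - b)) ≤ Real.sqrt (x * (1 - x)) := by
      apply Real.sqrt_le_sqrt
      have e1 : a * (1 - b) ≤ a * (1 - x) := by nlinarith [hx.2]
      have e2 : a * (1 - x) ≤ x * (1 - x) := by nlinarith [hx.1]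
      linarith
    have hsin : |2 * Real.sin (c * Real.arcsin (Real.sqrt x)) *
        Real.cos (c * Real.arcsin (Real.sqrt x))| ≤ 1 := by
      rw [← Real.sin_two_mul]
      exact Real.abs_sin_le_one _
    have h1x : 0 < Real.sqrt (1 - x) := Real.sqrt_pos.2 (by linarith)
    have hxr : 0 < Real.sqrt x := Real.sqrt_pos.2 hx0
    have hπ' := hπ.ne'
    have h1x' := h1x.ne'
    have hxr' := hxr.ne'
    have hmul : Real.sqrt (x * (1 - x)) = Real.sqrt x * Real.sqrt (1 - x) :=
      Real.sqrt_mul hx0.le _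
    have hpos2 : 0 < Real.sqrt (x * (1 - x)) := Real.sqrt_pos.2 hx1d
    have hv : c * (1 / Real.sqrt (1 - Real.sqrt x ^ 2) * (1 / (2 * Real.sqrt x)))
        = s / (Real.pi * Real.sqrt (x * (1 - x))) := by
      rw [hc, hsq, hmul]
      field_simp
    rw [hf', Real.norm_eq_abs, abs_mul, hv]
    have hvpos : 0 ≤ s / (Real.pi * Real.sqrt (x * (1 - x))) := by positivity
    rw [abs_of_nonneg hvpos]
    calc |2 * Real.sin (c * Real.arcsin (Real.sqrt x)) * Real.cos (c * Real.arcsin (Real.sqrt x))|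
          * (s / (Real.pi * Real.sqrt (x * (1 - x))))
        ≤ 1 * (s / (Real.pi * Real.sqrt (x * (1 - x)))) := by
          apply mul_le_mul_of_nonneg_right hsin hvpos
      _ = s / (Real.pi * Real.sqrt (x * (1 - x))) := one_mul _
      _ ≤ C := by
          rw [hC]
          apply div_le_div_of_nonneg_left hs0 (by positivity)
          exact mul_le_mul_of_nonneg_left hmono hπ.le
  have key := (convex_Icc a b).norm_image_sub_le_of_norm_hasDerivWithin_le hder hbound hq₂ hq₁
  have hfe : ∀ q, f q = Real.sin ((2 / Real.pi) * Real.arcsin (Real.sqrt q) * s) ^ 2 := by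
    intro q; rw [hf, hc]; ring_nf
  simp only [Real.norm_eq_abs] at key
  rw [hfe, hfe] at key
  exact key
end
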